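/- (Input-to-state stability of the strongly dissipative subsystem, Lemma 4.1, discrete case) Consider the discrete delayed z₂-subsystem with input, assume the strong dissipativity condition ℓ₂₂·‖w₂₂‖ < 1, fix v_ref : Ω → ℝ^{n₂}, and let z_ref2 : Ω → ℝ^{n₂} satisfy z_ref2(r) = Σ_{r'∈Ω} w₂₂(r,r')S₂₂(z_ref2(r')) + v_ref(r) for all r ∈ Ω. Then the subsystem is input-to-state stable at z_ref2 with respect to the perturbation input: there exist a class-KL function β and a class-K∞ function ν such that for every continuous initial history z₂,₀ : [−d̄,0] → (Ω → ℝ^{n₂}) and every continuous v₂ : [0,∞) → (Ω → ℝ^{n₂}), the solution z₂ of τ₂(r)·dz₂/dt(t,r) = −z₂(t,r) + Σ_{r'∈Ω} w₂₂(r,r')S₂₂(z₂(t−d₂₂(r,r'),r')) + v_ref(r) + v₂(t,r) with history z₂,₀ satisfies, for all t ≥ 0, ‖z₂(t)−z_ref2‖ ≤ β(sup_{s∈[−d̄,0]}‖z₂,₀(s)−z_ref2‖, t) + ν(sup_{s∈[0,t]}‖v₂(s)‖). -/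

import Mathlib

open Set Filter Topology

/-- Action of a matrix on a Euclidean vector. -/
noncomputable def mApply {n m : ℕ} (M : Matrix (Fin n) (Fin m) ℝ)
    (v : EuclideanSpace ℝ (Fin m)) : EuclideanSpace ℝ (Fin n) :=
  WithLp.toLp 2 (fun i => ∑ j, M i j * v j)

/-- Operator norm of a matrix, induced by the Euclidean norms. -/
noncomputable def matOpNorm {n m : ℕ} (M : Matrix (Fin n) (Fin m) ℝ) : ℝ :=
  ‖LinearMap.toContinuousLinearMap (Matrix.toEuclideanLin M)‖

/-- Norm of a state `x : Ω → ℝⁿ`: `‖x‖² = ∑_r |x r|²`. -/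
noncomputable def vnorm {Ω : Type*} [Fintype Ω] {n : ℕ}
    (x : Ω → EuclideanSpace ℝ (Fin n)) : ℝ :=
  Real.sqrt (∑ r, ‖x r‖ ^ 2)

/-- Operator-norm based norm of a kernel: `‖k‖² = ∑_{r,r'} ‖k(r,r')‖²_op`. -/
noncomputable def knormOp {Ω : Type*} [Fintype Ω] {n m : ℕ}
    (k : Ω → Ω → Matrix (Fin n) (Fin m) ℝ) : ℝ :=
  Real.sqrt (∑ r, ∑ r', matOpNorm (k r r') ^ 2)

/-- A function `ν : [0,∞) → [0,∞)` of class `K∞`: continuous, strictly increasing,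
`ν 0 = 0`, nonnegative, and `ν s → ∞` as `s → ∞`. -/
def ClassKinf (ν : ℝ → ℝ) : Prop :=
  ContinuousOn ν (Ici 0) ∧ StrictMonoOn ν (Ici 0) ∧ ν 0 = 0 ∧
    (∀ s ≥ (0:ℝ), 0 ≤ ν s) ∧ Tendsto ν atTop atTop

/-- A function `β : [0,∞) × [0,∞) → [0,∞)` of class `KL`: for each fixed `t`,
`β (·, t)` is continuous, strictly increasing and vanishes at `0`; for each fixed `s`,
`β (s, ·)` is non-increasing and tends to `0` at `∞`; and `β` is nonnegative. -/
def ClassKL (β : ℝ → ℝ → ℝ) : Prop :=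
  (∀ t ≥ (0:ℝ), ContinuousOn (fun s => β s t) (Ici 0) ∧
    StrictMonoOn (fun s => β s t) (Ici 0) ∧ β 0 t = 0) ∧
  (∀ s ≥ (0:ℝ), AntitoneOn (fun t => β s t) (Ici 0) ∧
    Tendsto (fun t => β s t) atTop (nhds 0)) ∧
  (∀ s ≥ (0:ℝ), ∀ t ≥ (0:ℝ), 0 ≤ β s t)

lemma mApply_eq_lin {n m : ℕ} (M : Matrix (Fin n) (Fin m) ℝ) (v : EuclideanSpace ℝ (Fin m)) :
    mApply M v = Matrix.toEuclideanLin M v := rfl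

lemma mApply_norm_le {n m : ℕ} (M : Matrix (Fin n) (Fin m) ℝ) (v : EuclideanSpace ℝ (Fin m)) :
    ‖mApply M v‖ ≤ matOpNorm M * ‖v‖ := by
  rw [mApply_eq_lin]
  exact (LinearMap.toContinuousLinearMap (Matrix.toEuclideanLin M)).le_opNorm v

lemma mApply_sub {n m : ℕ} (M : Matrix (Fin n) (Fin m) ℝ) (u v : EuclideanSpace ℝ (Fin m)) :
    mApply M u - mApply M v = mApply M (u - v) := by
  simp only [mApply_eq_lin]; rw [← map_sub]

lemma matOpNorm_nonneg {n m : ℕ} (M : Matrix (Fin n) (Fin m) ℝ) : 0 ≤ matOpNorm M :=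
  norm_nonneg _

-- sqrt-sum triangle inequality (Minkowski)
lemma sqrt_sum_sq_add_le {Ω : Type*} [Fintype Ω] (f g : Ω → ℝ) :
    Real.sqrt (∑ r, (f r + g r) ^ 2) ≤
      Real.sqrt (∑ r, f r ^ 2) + Real.sqrt (∑ r, g r ^ 2) := by
  have h := norm_add_le (E := EuclideanSpace ℝ Ω) ((WithLp.equiv 2 (Ω → ℝ)).symm f)
    ((WithLp.equiv 2 (Ω → ℝ)).symm g)
  simpa [EuclideanSpace.norm_eq, sq_abs] using h

lemma sqrt_sum_sq_mono {Ω : Type*} [Fintype Ω] {f g : Ω → ℝ} (h : ∀ r, |f r| ≤ g r) :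
    Real.sqrt (∑ r, f r ^ 2) ≤ Real.sqrt (∑ r, g r ^ 2) := by
  apply Real.sqrt_le_sqrt
  apply Finset.sum_le_sum
  intro r _
  calc f r ^ 2 = |f r| ^ 2 := (sq_abs _).symm
  _ ≤ g r ^ 2 := by
      have := h r
      have h0 : (0:ℝ) ≤ |f r| := abs_nonneg _
      nlinarith

lemma sqrt_card_sum_const {Ω : Type*} [Fintype Ω] (a : ℝ) (ha : 0 ≤ a) :
    Real.sqrt (∑ _r : Ω, a ^ 2) = Real.sqrt (Fintype.card Ω) * a := by
  rw [Finset.sum_const, Finset.card_univ, nsmul_eq_mul, Real.sqrt_mul (by positivity),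
    Real.sqrt_sq ha]


/-- Variation-of-constants style decay estimate for `h' = τ⁻¹ (g - h)`. -/
lemma decay_estimate {E : Type*} [NormedAddCommGroup E] [NormedSpace ℝ E]
    {h g : ℝ → E} {τ a T G : ℝ} (hτ : 0 < τ) (hG : 0 ≤ G)
    (hcont : ContinuousOn h (Icc a T))
    (hderiv : ∀ t ∈ Ico a T, HasDerivWithinAt h (τ⁻¹ • (g t - h t)) (Ici t) t)
    (hg : ∀ t ∈ Ico a T, ‖g t‖ ≤ G) :
    ∀ t ∈ Icc a T, ‖h t‖ ≤ Real.exp (-((t - a) / τ)) * ‖h a‖ + G := by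
  set f : ℝ → E := fun t => Real.exp ((t - a) / τ) • h t with hf
  have hfd : ∀ t ∈ Ico a T,
      HasDerivWithinAt f (Real.exp ((t - a) / τ) • (τ⁻¹ • g t)) (Ici t) t := by
    intro t ht
    have hexp : HasDerivWithinAt (fun s => Real.exp ((s - a) / τ))
        (Real.exp ((t - a) / τ) * τ⁻¹) (Ici t) t := by
      have h1 : HasDerivAt (fun s : ℝ => (s - a) / τ) τ⁻¹ t := by
        simpa [one_div] using (((hasDerivAt_id t).sub_const a).div_const τ)
      exact ((Real.hasDerivAt_exp ((t - a)/τ)).comp t h1).hasDerivWithinAt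
    have := hexp.smul (hderiv t ht)
    convert this using 1
    · rfl
    rw [smul_smul, smul_smul, smul_sub]
    module
  set B : ℝ → ℝ := fun t => ‖h a‖ - G + G * Real.exp ((t - a) / τ) with hB
  have hBd : ∀ t : ℝ, HasDerivAt B (G * Real.exp ((t - a) / τ) * τ⁻¹) t := by
    intro t
    have h1 : HasDerivAt (fun s : ℝ => (s - a) / τ) τ⁻¹ t := by
      simpa [one_div] using (((hasDerivAt_id t).sub_const a).div_const τ)
    have h2 : HasDerivAt (fun s => Real.exp ((s - a) / τ)) (Real.exp ((t - a)/τ) * τ⁻¹) t :=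
      by have := (Real.hasDerivAt_exp ((t - a)/τ)).comp t h1; exact this
    simpa [mul_assoc, hB] using ((h2.const_mul G).const_add (‖h a‖ - G))
  have hfc : ContinuousOn f (Icc a T) := by
    apply ContinuousOn.smul _ hcont
    exact (Real.continuous_exp.comp ((continuous_id.sub continuous_const).div_const τ)).continuousOn
  have key : ∀ t ∈ Icc a T, ‖f t‖ ≤ B t := by
    intro t ht
    refine image_norm_le_of_norm_deriv_right_le_deriv_boundary hfc hfd ?_ hBd ?_ ht
    · simp [hf, hB]
    · intro x hx
      rw [norm_smul, norm_smul]
      simp only [Real.norm_eq_abs, abs_of_nonneg (Real.exp_nonneg _),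
        abs_of_nonneg (le_of_lt (inv_pos.mpr hτ))]
      have := hg x hx
      calc Real.exp ((x - a) / τ) * (τ⁻¹ * ‖g x‖)
          ≤ Real.exp ((x - a) / τ) * (τ⁻¹ * G) := by
            apply mul_le_mul_of_nonneg_left _ (Real.exp_nonneg _)
            exact mul_le_mul_of_nonneg_left this (le_of_lt (inv_pos.mpr hτ))
        _ = G * Real.exp ((x - a) / τ) * τ⁻¹ := by ring
  intro t ht
  have h1 := key t ht
  have h2 : ‖f t‖ = Real.exp ((t - a) / τ) * ‖h t‖ := by
    rw [hf]; simp [norm_smul, abs_of_nonneg (Real.exp_nonneg _)]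
  rw [h2] at h1
  have hepos : 0 < Real.exp ((t - a) / τ) := Real.exp_pos _
  have hle1 : (0:ℝ) < Real.exp (-((t - a)/τ)) := Real.exp_pos _
  have h3 : ‖h t‖ ≤ B t / Real.exp ((t - a) / τ) := by
    rw [le_div_iff₀ hepos]
    have hc : Real.exp ((t - a) / τ) * ‖h t‖ = ‖h t‖ * Real.exp ((t - a) / τ) := mul_comm _ _
    linarith [h1]
  calc ‖h t‖ ≤ B t / Real.exp ((t - a) / τ) := h3
    _ = (‖h a‖ - G) / Real.exp ((t - a) / τ) + G := by
        rw [hB]; field_simp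
    _ ≤ ‖h a‖ / Real.exp ((t - a) / τ) + G := by
        gcongr
        exact sub_le_self _ hG
    _ = Real.exp (-((t - a) / τ)) * ‖h a‖ + G := by
        rw [Real.exp_neg, div_eq_mul_inv, mul_comm]

set_option maxHeartbeats 8000000 in
/-- **Input-to-state stability of the strongly dissipative subsystem**
(Lemma 4.1, discrete case). Under `ℓ₂₂·‖w₂₂‖ < 1`, the delayed `z₂`-subsystem is ISS at
the stationary state `z_ref2` with respect to the perturbation input `v₂`. -/
theorem iss_of_strongly_dissipative_subsystem
    {Ω : Type*} [Fintype Ω] [Nonempty Ω]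
    {n₂ : ℕ} (hn₂ : 0 < n₂)
    (dbar : ℝ) (hdbar : 0 < dbar)
    (τ₂ : Ω → ℝ) (hτ₂ : ∀ r, 0 < τ₂ r)
    (S₂₂ : EuclideanSpace ℝ (Fin n₂) → EuclideanSpace ℝ (Fin n₂))
    (Sb₂₂ : ℝ) (hSb₂₂ : ∀ x, ‖S₂₂ x‖ ≤ Sb₂₂)
    (l₂₂ : ℝ) (hl₂₂ : ∀ x y, ‖S₂₂ x - S₂₂ y‖ ≤ l₂₂ * ‖x - y‖)
    (w₂₂ : Ω → Ω → Matrix (Fin n₂) (Fin n₂) ℝ)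
    (d₂₂ : Ω → Ω → ℝ) (hd₂₂ : ∀ r r', d₂₂ r r' ∈ Icc 0 dbar)
    -- strong dissipativity
    (hdiss : l₂₂ * knormOp w₂₂ < 1)
    -- stationary state associated with the constant input v_ref
    (vref : Ω → EuclideanSpace ℝ (Fin n₂))
    (zref2 : Ω → EuclideanSpace ℝ (Fin n₂))
    (hzref2 : ∀ r, zref2 r = (∑ r', mApply (w₂₂ r r') (S₂₂ (zref2 r'))) + vref r) :
    ∃ β : ℝ → ℝ → ℝ, ∃ ν : ℝ → ℝ, ClassKL β ∧ ClassKinf ν ∧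
      ∀ (z₂0 : ℝ → Ω → EuclideanSpace ℝ (Fin n₂)),
        ContinuousOn z₂0 (Icc (-dbar) 0) →
      ∀ (v₂ : ℝ → Ω → EuclideanSpace ℝ (Fin n₂)),
        ContinuousOn v₂ (Ici 0) →
      ∀ (z₂ : ℝ → Ω → EuclideanSpace ℝ (Fin n₂)),
        ContinuousOn z₂ (Ici (-dbar)) →
        (∀ s ∈ Icc (-dbar) (0:ℝ), z₂ s = z₂0 s) →
        (∀ t ≥ (0:ℝ), ∀ r, HasDerivWithinAt (fun s => z₂ s r)
          ((τ₂ r)⁻¹ • (-(z₂ t r)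
            + (∑ r', mApply (w₂₂ r r') (S₂₂ (z₂ (t - d₂₂ r r') r')))
            + vref r + v₂ t r)) (Ici 0) t) →
        ∀ t ≥ (0:ℝ),
          vnorm (fun r => z₂ t r - zref2 r)
            ≤ β (⨆ s : Icc (-dbar) (0:ℝ), vnorm (fun r => z₂0 s.1 r - zref2 r)) t
              + ν (⨆ s : Icc (0:ℝ) t, vnorm (fun r => v₂ s.1 r)) := by
  classical
  -- nonnegativity of the Lipschitz constant
  have hl0 : 0 ≤ l₂₂ := by
    have h1 := hl₂₂ (EuclideanSpace.single (⟨0, hn₂⟩ : Fin n₂) (1:ℝ)) 0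
    have h2 : ‖EuclideanSpace.single (⟨0, hn₂⟩ : Fin n₂) (1:ℝ) - 0‖ = 1 := by
      simp [EuclideanSpace.norm_single]
    rw [h2, mul_one] at h1
    exact le_trans (norm_nonneg _) h1
  set q := l₂₂ * knormOp w₂₂ with hqdef
  have hkn0 : 0 ≤ knormOp w₂₂ := Real.sqrt_nonneg _
  have hq0 : 0 ≤ q := mul_nonneg hl0 hkn0
  have hq1 : q < 1 := hdiss
  set c : Ω → ℝ := fun r => Real.sqrt (∑ r', matOpNorm (w₂₂ r r') ^ 2) with hcdef
  have hc0 : ∀ r, 0 ≤ c r := fun r => Real.sqrt_nonneg _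
  have hcsum : Real.sqrt (∑ r, (c r)^2) = knormOp w₂₂ := by
    rw [knormOp]
    congr 1
    refine Finset.sum_congr rfl fun r _ => ?_
    exact Real.sq_sqrt (Finset.sum_nonneg fun r' _ => sq_nonneg _)
  obtain ⟨r₀⟩ := ‹Nonempty Ω›
  set τM := Finset.univ.sup' Finset.univ_nonempty τ₂ with hτMdef
  have hτMle : ∀ r, τ₂ r ≤ τM := fun r => Finset.le_sup' τ₂ (Finset.mem_univ r)
  have hτM0 : 0 < τM := lt_of_lt_of_le (hτ₂ r₀) (hτMle r₀)
  set κ := Real.sqrt (Fintype.card Ω) with hκdef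
  have hκ1 : 1 ≤ κ := by
    rw [hκdef, show (1:ℝ) = Real.sqrt 1 by simp]
    apply Real.sqrt_le_sqrt
    exact_mod_cast Fintype.card_pos
  have hκ0 : 0 < κ := lt_of_lt_of_le one_pos hκ1
  set Δ := τM * Real.log (2 * κ / (1 - q)) with hΔdef
  have harg : 1 < 2 * κ / (1 - q) := by
    rw [lt_div_iff₀ (by linarith)]
    nlinarith
  have hΔ0 : 0 < Δ := mul_pos hτM0 (Real.log_pos harg)
  have hexpΔ : Real.exp (-(Δ / τM)) = (1 - q) / (2 * κ) := by
    rw [hΔdef, mul_comm, mul_div_assoc, div_self hτM0.ne', mul_one, Real.exp_neg,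
      Real.exp_log (by positivity), inv_div]
  set L := Δ + dbar with hLdef
  have hL0 : 0 < L := by rw [hLdef]; linarith
  set θ := (1 + q)/2 with hθdef
  have hθ0 : 0 < θ := by rw [hθdef]; linarith
  have hθ1 : θ < 1 := by rw [hθdef]; linarith
  set μ := -Real.log θ / L with hμdef
  have hμ0 : 0 < μ := div_pos (neg_pos.mpr (Real.log_neg hθ0 hθ1)) hL0
  set Cβ := κ / (θ * (1 - q)) with hCβdef
  have hCβ0 : 0 < Cβ := by
    rw [hCβdef]
    exact div_pos hκ0 (mul_pos hθ0 (by linarith))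
  set Cν := Cβ + κ / (1 - θ) with hCνdef
  have hCν0 : 0 < Cν := by
    have : 0 < κ / (1 - θ) := by apply div_pos hκ0; linarith
    rw [hCνdef]; linarith
  refine ⟨fun s t => Cβ * Real.exp (-(μ * t)) * s, fun u => Cν * u, ?_, ?_, ?_⟩
  · -- ClassKL
    refine ⟨fun t _ => ⟨?_, ?_, by ring⟩, fun s hs => ⟨?_, ?_⟩, fun s hs t ht => ?_⟩
    · exact (continuous_const.mul continuous_id).continuousOn
    · intro a _ b _ hab
      exact mul_lt_mul_of_pos_left hab (by positivity)
    · intro t1 _ t2 _ h12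
      have hee : Real.exp (-(μ * t2)) ≤ Real.exp (-(μ * t1)) := by
        apply Real.exp_le_exp.mpr
        nlinarith
      have := mul_le_mul_of_nonneg_left hee hCβ0.le
      exact mul_le_mul_of_nonneg_right this hs
    · have h1 : Tendsto (fun t : ℝ => μ * t) atTop atTop :=
        Tendsto.const_mul_atTop hμ0 tendsto_id
      have h2 : Tendsto (fun t : ℝ => -(μ * t)) atTop atBot :=
        tendsto_neg_atBot_iff.mpr h1
      have h3 : Tendsto (fun t : ℝ => Real.exp (-(μ * t))) atTop (nhds 0) :=
        Real.tendsto_exp_atBot.comp h2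
      have h4 := (h3.const_mul Cβ).mul_const s
      simpa using h4
    · positivity
  · -- ClassKinf
    refine ⟨(continuous_const.mul continuous_id).continuousOn, ?_, by ring, ?_, ?_⟩
    · intro a _ b _ hab
      exact mul_lt_mul_of_pos_left hab hCν0
    · intro s hs; positivity
    · exact Tendsto.const_mul_atTop hCν0 tendsto_id

  -- main estimate
  intro z₂0 hz0c v₂ hv₂c z₂ hzc hhist hdz T hT
  set s₀ := ⨆ s : Icc (-dbar) (0:ℝ), vnorm (fun r => z₂0 s.1 r - zref2 r) with hs₀def
  set vb := ⨆ s : Icc (0:ℝ) T, vnorm (fun r => v₂ s.1 r) with hvbdef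
  have hvnorm_nonneg : ∀ (x : Ω → EuclideanSpace ℝ (Fin n₂)), 0 ≤ vnorm x :=
    fun x => Real.sqrt_nonneg _
  have hcomp_le : ∀ (x : Ω → EuclideanSpace ℝ (Fin n₂)) (r : Ω), ‖x r‖ ≤ vnorm x := by
    intro x r
    rw [show vnorm x = Real.sqrt (∑ r, ‖x r‖^2) from rfl,
      show ‖x r‖ = Real.sqrt (‖x r‖^2) from (Real.sqrt_sq (norm_nonneg _)).symm]
    apply Real.sqrt_le_sqrt
    exact Finset.single_le_sum (f := fun i => ‖x i‖^2) (fun i _ => sq_nonneg _)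
      (Finset.mem_univ r)
  have hzcomp : ∀ r, ContinuousOn (fun t => z₂ t r - zref2 r) (Ici (-dbar)) := fun r =>
    ((continuous_apply r).comp_continuousOn hzc).sub continuousOn_const
  -- bound for the input sup
  have hvb_mem : ∀ s ∈ Icc (0:ℝ) T, vnorm (fun r => v₂ s r) ≤ vb := by
    intro s hs
    have hcont : ContinuousOn (fun s => vnorm (fun r => v₂ s r)) (Icc (0:ℝ) T) := by
      apply Real.continuous_sqrt.comp_continuousOn
      apply continuousOn_finset_sum
      intro r _
      exact (((continuous_apply r).comp_continuousOn (hv₂c.mono Icc_subset_Ici_self)).norm).pow 2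
    have hbdd : BddAbove (Set.range (fun s : Icc (0:ℝ) T => vnorm (fun r => v₂ s.1 r))) := by
      have h1 := (isCompact_Icc (a := (0:ℝ)) (b := T)).bddAbove_image hcont
      rwa [Set.image_eq_range] at h1
    exact le_ciSup hbdd (⟨s, hs⟩ : Icc (0:ℝ) T)
  have hvb0 : 0 ≤ vb :=
    le_trans (hvnorm_nonneg _) (hvb_mem 0 ⟨le_refl _, hT⟩)
  -- bound for the history sup
  have hs₀_mem : ∀ u ∈ Icc (-dbar) (0:ℝ), vnorm (fun r => z₂ u r - zref2 r) ≤ s₀ := by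
    intro u hu
    have heq : vnorm (fun r => z₂ u r - zref2 r) = vnorm (fun r => z₂0 u r - zref2 r) := by
      rw [hhist u hu]
    rw [heq]
    have hcont : ContinuousOn (fun u => vnorm (fun r => z₂0 u r - zref2 r))
        (Icc (-dbar) (0:ℝ)) := by
      apply Real.continuous_sqrt.comp_continuousOn
      apply continuousOn_finset_sum
      intro r _
      exact ((((continuous_apply r).comp_continuousOn hz0c).sub continuousOn_const).norm).pow 2
    have hbdd : BddAbove (Set.range
        (fun s : Icc (-dbar) (0:ℝ) => vnorm (fun r => z₂0 s.1 r - zref2 r))) := by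
      have h1 := (isCompact_Icc (a := -dbar) (b := (0:ℝ))).bddAbove_image hcont
      rwa [Set.image_eq_range] at h1
    exact le_ciSup hbdd (⟨u, hu⟩ : Icc (-dbar) (0:ℝ))
  have hs₀0 : 0 ≤ s₀ :=
    le_trans (hvnorm_nonneg _) (hs₀_mem 0 ⟨by linarith, le_refl _⟩)
  -- windowed component sups
  set nn : ℝ → Ω → ℝ :=
    fun a r => sSup ((fun u => ‖z₂ u r - zref2 r‖) '' Icc (a - dbar) T) with hnndef
  set NN : ℝ → ℝ := fun a => Real.sqrt (∑ r, (nn a r)^2) with hNNdef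
  have hNNnonneg : ∀ a, 0 ≤ NN a := fun a => Real.sqrt_nonneg _
  have hbddnn : ∀ a r, 0 ≤ a →
      BddAbove ((fun u => ‖z₂ u r - zref2 r‖) '' Icc (a - dbar) T) := by
    intro a r ha
    apply IsCompact.bddAbove_image isCompact_Icc
    apply ((hzcomp r).mono ?_).norm
    intro u hu
    have : a - dbar ≤ u := hu.1
    simp only [mem_Ici]
    linarith
  have hnn_mem : ∀ a r, 0 ≤ a → ∀ u ∈ Icc (a - dbar) T, ‖z₂ u r - zref2 r‖ ≤ nn a r :=
    fun a r ha u hu => le_csSup (hbddnn a r ha) ⟨u, hu, rfl⟩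
  have hnn_le : ∀ a r (M : ℝ), a - dbar ≤ T →
      (∀ u ∈ Icc (a - dbar) T, ‖z₂ u r - zref2 r‖ ≤ M) → nn a r ≤ M := by
    intro a r M hne hM
    have hnonempty : ((fun u => ‖z₂ u r - zref2 r‖) '' Icc (a - dbar) T).Nonempty :=
      ⟨_, ⟨a - dbar, ⟨le_refl _, hne⟩, rfl⟩⟩
    refine csSup_le hnonempty ?_
    rintro x ⟨u, hu, rfl⟩
    exact hM u hu
  have hnn0 : ∀ a r, 0 ≤ a → a - dbar ≤ T → 0 ≤ nn a r := fun a r ha hne =>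
    le_trans (norm_nonneg _) (hnn_mem a r ha (a - dbar) ⟨le_refl _, hne⟩)
  have hnn_le_NN : ∀ a r, 0 ≤ a → a - dbar ≤ T → nn a r ≤ NN a := by
    intro a r ha hne
    rw [hNNdef]
    calc nn a r = Real.sqrt ((nn a r)^2) := (Real.sqrt_sq (hnn0 a r ha hne)).symm
      _ ≤ Real.sqrt (∑ r', (nn a r')^2) := by
          apply Real.sqrt_le_sqrt
          exact Finset.single_le_sum (f := fun r' => (nn a r')^2)
            (fun i _ => sq_nonneg _) (Finset.mem_univ r)
  -- restart estimate via variation of constants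
  have restart : ∀ a, 0 ≤ a → a ≤ T → ∀ r, ∀ u ∈ Icc a T,
      ‖z₂ u r - zref2 r‖ ≤ Real.exp (-((u - a) / τ₂ r)) * ‖z₂ a r - zref2 r‖
        + (l₂₂ * c r * NN a + vb) := by
    intro a ha haT r
    have hane : a - dbar ≤ T := by linarith
    set g : ℝ → EuclideanSpace ℝ (Fin n₂) := fun t =>
      (∑ r', mApply (w₂₂ r r') (S₂₂ (z₂ (t - d₂₂ r r') r') - S₂₂ (zref2 r'))) + v₂ t r
      with hgdef
    have hgh : ∀ t, g t - (z₂ t r - zref2 r) =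
        -(z₂ t r) + (∑ r', mApply (w₂₂ r r') (S₂₂ (z₂ (t - d₂₂ r r') r'))) + vref r
          + v₂ t r := by
      intro t
      rw [hgdef]
      have h1 : (∑ r', mApply (w₂₂ r r') (S₂₂ (z₂ (t - d₂₂ r r') r') - S₂₂ (zref2 r')))
          = (∑ r', mApply (w₂₂ r r') (S₂₂ (z₂ (t - d₂₂ r r') r')))
            - (∑ r', mApply (w₂₂ r r') (S₂₂ (zref2 r'))) := by
        rw [← Finset.sum_sub_distrib]
        exact Finset.sum_congr rfl fun r' _ => (mApply_sub _ _ _).symm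
      simp only [h1]
      rw [hzref2 r]
      abel
    have hG : 0 ≤ l₂₂ * c r * NN a + vb := by
      have := mul_nonneg (mul_nonneg hl0 (hc0 r)) (hNNnonneg a)
      linarith
    refine decay_estimate (g := g) (hτ₂ r) hG ((hzcomp r).mono ?_) ?_ ?_
    · intro u hu
      have : a ≤ u := hu.1
      simp only [mem_Ici]
      linarith
    · intro t ht
      have h0t : (0:ℝ) ≤ t := le_trans ha ht.1
      have hd := ((hdz t h0t r).sub_const (zref2 r)).mono
        (Ici_subset_Ici.mpr h0t)
      rw [hgh t]
      exact hd
    · intro t ht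
      have htIcc : t ∈ Icc (0:ℝ) T := ⟨le_trans ha ht.1, le_of_lt ht.2⟩
      have hv : ‖v₂ t r‖ ≤ vb :=
        le_trans (hcomp_le (fun r' => v₂ t r') r) (hvb_mem t htIcc)
      have hsum : ‖∑ r', mApply (w₂₂ r r') (S₂₂ (z₂ (t - d₂₂ r r') r') - S₂₂ (zref2 r'))‖
          ≤ l₂₂ * c r * NN a := by
        calc ‖∑ r', mApply (w₂₂ r r') (S₂₂ (z₂ (t - d₂₂ r r') r') - S₂₂ (zref2 r'))‖
            ≤ ∑ r', ‖mApply (w₂₂ r r') (S₂₂ (z₂ (t - d₂₂ r r') r') - S₂₂ (zref2 r'))‖ :=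
              norm_sum_le _ _
          _ ≤ ∑ r', matOpNorm (w₂₂ r r') * (l₂₂ * nn a r') := by
              apply Finset.sum_le_sum
              intro r' _
              refine le_trans (mApply_norm_le _ _) ?_
              apply mul_le_mul_of_nonneg_left _ (matOpNorm_nonneg _)
              refine le_trans (hl₂₂ _ _) ?_
              apply mul_le_mul_of_nonneg_left _ hl0
              apply hnn_mem a r' ha
              constructor
              · have h1 := (hd₂₂ r r').2
                have h2 := ht.1
                linarith
              · have h1 := (hd₂₂ r r').1
                have h2 := le_of_lt ht.2
                linarith
          _ = l₂₂ * ∑ r', matOpNorm (w₂₂ r r') * nn a r' := by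
              rw [Finset.mul_sum]
              exact Finset.sum_congr rfl fun r' _ => by ring
          _ ≤ l₂₂ * (c r * NN a) := by
              apply mul_le_mul_of_nonneg_left _ hl0
              exact Real.sum_mul_le_sqrt_mul_sqrt Finset.univ
                (fun r' => matOpNorm (w₂₂ r r')) (fun r' => nn a r')
          _ = l₂₂ * c r * NN a := (mul_assoc _ _ _).symm
      calc ‖g t‖ ≤ ‖∑ r', mApply (w₂₂ r r') (S₂₂ (z₂ (t - d₂₂ r r') r') - S₂₂ (zref2 r'))‖
            + ‖v₂ t r‖ := norm_add_le _ _
        _ ≤ l₂₂ * c r * NN a + vb := add_le_add hsum hv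
  -- one contraction step
  have hstep : ∀ a, 0 ≤ a → a + L - dbar ≤ T → NN (a + L) ≤ θ * NN a + κ * vb := by
    intro a ha hTb
    have hLd : L - dbar = Δ := by rw [hLdef]; ring
    have haT : a ≤ T := by linarith
    have hane : a - dbar ≤ T := by linarith
    have key : ∀ r, nn (a + L) r ≤ (1 - q)/(2*κ) * NN a + l₂₂ * c r * NN a + vb := by
      intro r
      apply hnn_le (a + L) r _ (by linarith)
      intro u hu
      have hu1 : a + Δ ≤ u := by
        have := hu.1
        linarith
      have huT : u ≤ T := hu.2
      have h1 := restart a ha haT r u ⟨by linarith, huT⟩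
      have hexp : Real.exp (-((u - a)/τ₂ r)) ≤ (1 - q)/(2*κ) := by
        rw [← hexpΔ]
        apply Real.exp_le_exp.mpr
        rw [neg_le_neg_iff]
        apply div_le_div₀ (by linarith) (by linarith) (hτ₂ r) (hτMle r)
      have hha : ‖z₂ a r - zref2 r‖ ≤ NN a :=
        le_trans (hnn_mem a r ha a ⟨by linarith, haT⟩) (hnn_le_NN a r ha hane)
      calc ‖z₂ u r - zref2 r‖
          ≤ Real.exp (-((u - a)/τ₂ r)) * ‖z₂ a r - zref2 r‖ + (l₂₂ * c r * NN a + vb) := h1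
        _ ≤ (1 - q)/(2*κ) * NN a + (l₂₂ * c r * NN a + vb) := by
            have hnon : (0:ℝ) ≤ (1 - q)/(2*κ) :=
              div_nonneg (by linarith) (by positivity)
            have := mul_le_mul hexp hha (norm_nonneg _) hnon
            linarith
        _ = (1 - q)/(2*κ) * NN a + l₂₂ * c r * NN a + vb := by ring
    have h1 : NN (a + L)
        ≤ Real.sqrt (∑ r, ((1 - q)/(2*κ) * NN a + l₂₂ * c r * NN a + vb)^2) := by
      rw [hNNdef]
      apply sqrt_sum_sq_mono
      intro r
      rw [abs_of_nonneg (hnn0 (a + L) r (by linarith) (by linarith))]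
      exact key r
    have h2 : Real.sqrt (∑ r, ((1 - q)/(2*κ) * NN a + l₂₂ * c r * NN a + vb)^2)
        ≤ Real.sqrt (∑ r, ((1 - q)/(2*κ) * NN a + l₂₂ * c r * NN a)^2)
          + Real.sqrt (∑ _r : Ω, vb^2) :=
      sqrt_sum_sq_add_le _ _
    have h3 : Real.sqrt (∑ r, ((1 - q)/(2*κ) * NN a + l₂₂ * c r * NN a)^2)
        ≤ Real.sqrt (∑ _r : Ω, ((1 - q)/(2*κ) * NN a)^2)
          + Real.sqrt (∑ r, (l₂₂ * c r * NN a)^2) :=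
      sqrt_sum_sq_add_le _ _
    have e1 : Real.sqrt (∑ _r : Ω, ((1 - q)/(2*κ) * NN a)^2) = (1 - q)/2 * NN a := by
      have hnon : (0:ℝ) ≤ (1 - q)/(2*κ) * NN a :=
        mul_nonneg (div_nonneg (by linarith) (by positivity)) (hNNnonneg a)
      rw [sqrt_card_sum_const _ hnon, ← hκdef]
      have hκne : κ ≠ 0 := hκ0.ne'
      field_simp
    have e2 : Real.sqrt (∑ r, (l₂₂ * c r * NN a)^2) = q * NN a := by
      have hre : ∀ r : Ω, (l₂₂ * c r * NN a)^2 = (l₂₂ * NN a)^2 * (c r)^2 :=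
        fun r => by ring
      rw [Finset.sum_congr rfl (fun r _ => hre r), ← Finset.mul_sum,
        Real.sqrt_mul (sq_nonneg _), Real.sqrt_sq (mul_nonneg hl0 (hNNnonneg a)), hcsum]
      rw [hqdef]
      ring
    have e3 : Real.sqrt (∑ _r : Ω, vb^2) = κ * vb := by
      rw [sqrt_card_sum_const _ hvb0, ← hκdef]
    have hfin : NN (a + L) ≤ (1 - q)/2 * NN a + q * NN a + κ * vb := by
      calc NN (a + L) ≤ _ := h1
        _ ≤ _ + Real.sqrt (∑ _r : Ω, vb^2) := h2
        _ ≤ (Real.sqrt (∑ _r : Ω, ((1 - q)/(2*κ) * NN a)^2)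
              + Real.sqrt (∑ r, (l₂₂ * c r * NN a)^2)) + Real.sqrt (∑ _r : Ω, vb^2) := by
            linarith [h3]
        _ = (1 - q)/2 * NN a + q * NN a + κ * vb := by rw [e1, e2, e3]
    have : (1 - q)/2 * NN a + q * NN a = θ * NN a := by rw [hθdef]; ring
    linarith
  -- base estimate
  have hbase : NN 0 ≤ κ * (s₀ + vb) / (1 - q) := by
    have key : ∀ r, nn 0 r ≤ s₀ + l₂₂ * c r * NN 0 + vb := by
      intro r
      apply hnn_le 0 r _ (by linarith)
      intro u hu
      have hlcn : 0 ≤ l₂₂ * c r * NN 0 :=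
        mul_nonneg (mul_nonneg hl0 (hc0 r)) (hNNnonneg 0)
      rcases le_or_gt u 0 with hu0 | hu0
      · have huI : u ∈ Icc (-dbar) (0:ℝ) := ⟨by have := hu.1; linarith, hu0⟩
        calc ‖z₂ u r - zref2 r‖ ≤ vnorm (fun r' => z₂ u r' - zref2 r') :=
              hcomp_le (fun r' => z₂ u r' - zref2 r') r
          _ ≤ s₀ := hs₀_mem u huI
          _ ≤ s₀ + l₂₂ * c r * NN 0 + vb := by linarith
      · have h1 := restart 0 le_rfl hT r u ⟨le_of_lt hu0, hu.2⟩
        have h2 : Real.exp (-((u - 0)/τ₂ r)) ≤ 1 := by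
          apply Real.exp_le_one_iff.mpr
          rw [neg_nonpos]
          apply div_nonneg (by linarith) (hτ₂ r).le
        have h3 : ‖z₂ 0 r - zref2 r‖ ≤ s₀ :=
          le_trans (hcomp_le (fun r' => z₂ 0 r' - zref2 r') r)
            (hs₀_mem 0 ⟨by linarith, le_refl _⟩)
        have h4 : Real.exp (-((u - 0)/τ₂ r)) * ‖z₂ 0 r - zref2 r‖ ≤ s₀ := by
          calc Real.exp (-((u - 0)/τ₂ r)) * ‖z₂ 0 r - zref2 r‖
              ≤ 1 * s₀ := mul_le_mul h2 h3 (norm_nonneg _) zero_le_one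
            _ = s₀ := one_mul _
        calc ‖z₂ u r - zref2 r‖
            ≤ Real.exp (-((u - 0)/τ₂ r)) * ‖z₂ 0 r - zref2 r‖
              + (l₂₂ * c r * NN 0 + vb) := h1
          _ ≤ s₀ + l₂₂ * c r * NN 0 + vb := by linarith
    have h1 : NN 0 ≤ Real.sqrt (∑ r, (s₀ + l₂₂ * c r * NN 0 + vb)^2) := by
      rw [hNNdef]
      apply sqrt_sum_sq_mono
      intro r
      rw [abs_of_nonneg (hnn0 0 r le_rfl (by linarith))]
      exact key r
    have h2 : Real.sqrt (∑ r, (s₀ + l₂₂ * c r * NN 0 + vb)^2)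
        ≤ Real.sqrt (∑ r, (s₀ + l₂₂ * c r * NN 0)^2) + Real.sqrt (∑ _r : Ω, vb^2) :=
      sqrt_sum_sq_add_le _ _
    have h3 : Real.sqrt (∑ r, (s₀ + l₂₂ * c r * NN 0)^2)
        ≤ Real.sqrt (∑ _r : Ω, s₀^2) + Real.sqrt (∑ r, (l₂₂ * c r * NN 0)^2) :=
      sqrt_sum_sq_add_le _ _
    have e1 : Real.sqrt (∑ _r : Ω, s₀^2) = κ * s₀ := by
      rw [sqrt_card_sum_const _ hs₀0, ← hκdef]
    have e2 : Real.sqrt (∑ r, (l₂₂ * c r * NN 0)^2) = q * NN 0 := by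
      have hre : ∀ r : Ω, (l₂₂ * c r * NN 0)^2 = (l₂₂ * NN 0)^2 * (c r)^2 :=
        fun r => by ring
      rw [Finset.sum_congr rfl (fun r _ => hre r), ← Finset.mul_sum,
        Real.sqrt_mul (sq_nonneg _), Real.sqrt_sq (mul_nonneg hl0 (hNNnonneg 0)), hcsum]
      rw [hqdef]
      ring
    have e3 : Real.sqrt (∑ _r : Ω, vb^2) = κ * vb := by
      rw [sqrt_card_sum_const _ hvb0, ← hκdef]
    have hsum : NN 0 ≤ κ * s₀ + q * NN 0 + κ * vb := by
      calc NN 0 ≤ _ := h1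
        _ ≤ _ := h2
        _ ≤ (Real.sqrt (∑ _r : Ω, s₀^2) + Real.sqrt (∑ r, (l₂₂ * c r * NN 0)^2))
            + Real.sqrt (∑ _r : Ω, vb^2) := by linarith [h3]
        _ = κ * s₀ + q * NN 0 + κ * vb := by rw [e1, e2, e3]
    rw [le_div_iff₀ (by linarith : (0:ℝ) < 1 - q)]
    nlinarith [hsum]
  -- iteration
  have hiter : ∀ k : ℕ, (k : ℝ) * L - dbar ≤ T →
      NN ((k:ℝ) * L) ≤ θ^k * NN 0 + κ * vb / (1 - θ) := by
    intro k
    induction k with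
    | zero =>
      intro _
      have hpos : 0 ≤ κ * vb / (1 - θ) :=
        div_nonneg (mul_nonneg hκ0.le hvb0) (by linarith)
      have : ((0:ℕ) : ℝ) * L = 0 := by norm_num
      rw [this, pow_zero, one_mul]
      linarith
    | succ k ih =>
      intro hk
      have hkc : ((k:ℕ) : ℝ) ≥ 0 := Nat.cast_nonneg k
      have hk1 : ((k + 1 : ℕ) : ℝ) = (k : ℝ) + 1 := by push_cast; ring
      rw [hk1] at hk
      have hkk : (k:ℝ) * L - dbar ≤ T := by nlinarith
      have ihk := ih hkk
      have h1 := hstep ((k:ℝ) * L) (by positivity) (by nlinarith)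
      have heq : ((k + 1 : ℕ) : ℝ) * L = (k:ℝ) * L + L := by rw [hk1]; ring
      rw [heq]
      calc NN ((k:ℝ) * L + L) ≤ θ * NN ((k:ℝ)*L) + κ * vb := h1
        _ ≤ θ * (θ^k * NN 0 + κ * vb / (1 - θ)) + κ * vb := by
            have := mul_le_mul_of_nonneg_left ihk hθ0.le
            linarith
        _ = θ^(k+1) * NN 0 + (θ * (κ * vb / (1 - θ)) + κ * vb) := by ring
        _ = θ^(k+1) * NN 0 + κ * vb / (1 - θ) := by
            congr 1
            have h1θ : (1:ℝ) - θ ≠ 0 := by linarith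
            field_simp
            ring
  -- conclusion
  set k := Nat.floor ((T + dbar)/L) with hkdef
  have hfl0 : (0:ℝ) ≤ (T + dbar)/L := by positivity
  have hk1 : (k:ℝ) * L ≤ T + dbar := by
    have h := Nat.floor_le hfl0
    calc (k:ℝ) * L ≤ ((T + dbar)/L) * L := mul_le_mul_of_nonneg_right h hL0.le
      _ = T + dbar := div_mul_cancel₀ _ hL0.ne'
  have hk2 : (T + dbar)/L < (k:ℝ) + 1 := Nat.lt_floor_add_one _
  have hfin1 : vnorm (fun r => z₂ T r - zref2 r) ≤ NN ((k:ℝ) * L) := by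
    rw [show vnorm (fun r => z₂ T r - zref2 r)
        = Real.sqrt (∑ r, ‖z₂ T r - zref2 r‖^2) from rfl, hNNdef]
    apply sqrt_sum_sq_mono
    intro r
    rw [abs_norm]
    exact hnn_mem ((k:ℝ)*L) r (by positivity) T ⟨by linarith, le_refl _⟩
  have hiterk := hiter k (by linarith)
  have hlogθ : Real.log θ < 0 := Real.log_neg hθ0 hθ1
  have hθk : (θ:ℝ)^k ≤ Real.exp (-(μ * T)) / θ := by
    have hklb : T/L - 1 ≤ (k:ℝ) := by
      have hTL : T/L ≤ (T + dbar)/L := (div_le_div_iff_of_pos_right hL0).mpr (by linarith)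
      linarith
    calc θ^k = Real.exp (Real.log θ) ^ k := by rw [Real.exp_log hθ0]
      _ = Real.exp ((k:ℝ) * Real.log θ) := (Real.exp_nat_mul _ k).symm
      _ ≤ Real.exp ((T/L - 1) * Real.log θ) := by
          apply Real.exp_le_exp.mpr
          nlinarith
      _ = Real.exp (-(μ * T)) / θ := by
          rw [sub_mul, one_mul, Real.exp_sub, Real.exp_log hθ0]
          have harg2 : -(μ * T) = T / L * Real.log θ := by
            rw [hμdef]; field_simp
          rw [harg2]
  have hNN0b : NN 0 ≤ κ * (s₀ + vb) / (1 - q) := hbase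
  have hexpT1 : Real.exp (-(μ * T)) ≤ 1 := by
    apply Real.exp_le_one_iff.mpr
    rw [neg_nonpos]
    positivity
  have hKpos : 0 ≤ κ * (s₀ + vb) / (1 - q) := by
    apply div_nonneg _ (by linarith)
    apply mul_nonneg hκ0.le
    linarith
  have hθkpos : (0:ℝ) ≤ θ^k := pow_nonneg hθ0.le k
  show vnorm (fun r => z₂ T r - zref2 r) ≤ Cβ * Real.exp (-(μ * T)) * s₀ + Cν * vb
  calc vnorm (fun r => z₂ T r - zref2 r) ≤ NN ((k:ℝ) * L) := hfin1
    _ ≤ θ^k * NN 0 + κ * vb / (1 - θ) := hiterk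
    _ ≤ θ^k * (κ * (s₀ + vb) / (1 - q)) + κ * vb / (1 - θ) := by
        have := mul_le_mul_of_nonneg_left hNN0b hθkpos
        linarith
    _ ≤ (Real.exp (-(μ * T)) / θ) * (κ * (s₀ + vb) / (1 - q)) + κ * vb / (1 - θ) := by
        have := mul_le_mul_of_nonneg_right hθk hKpos
        linarith
    _ = Cβ * Real.exp (-(μ * T)) * s₀ + (Cβ * Real.exp (-(μ * T)) * vb
          + κ * vb / (1 - θ)) := by
        rw [hCβdef]
        field_simp
        ring
    _ ≤ Cβ * Real.exp (-(μ * T)) * s₀ + Cν * vb := by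
        have h1 : Cβ * Real.exp (-(μ * T)) * vb ≤ Cβ * vb := by
          have := mul_le_mul_of_nonneg_left hexpT1 hCβ0.le
          exact mul_le_mul_of_nonneg_right (by linarith) hvb0
        have h2 : κ * vb / (1 - θ) = (κ / (1 - θ)) * vb := by ring
        rw [hCνdef]
        nlinarith [h1]
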